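/- Let E be a point with ‖E‖ = d > 1 and consider points X_p on the unit sphere with normal N_p = X_p. Writing β_p for the angle between X_p and E, the distance ‖E − X_p‖ = √(d² + 1 − 2d cos β_p) is strictly increasing in β_p on [0, π], and the NPL intensity B_p = e·(d cos β_p − 1)/(d² + 1 − 2d cos β_p)^{3/2} is strictly decreasing in β_p on the lit region where d cos β_p > 1. Hence the set of lit sphere points with a fixed intensity value is exactly a circle {X : ⟨X, E/‖E‖⟩ = cos β₀} for some fixed β₀. -/

import Mathlib

open Real Set

lemma sqrt_pow3 {a : ℝ} (ha : 0 ≤ a) : Real.sqrt a ^ 3 = a ^ ((3:ℝ)/2) := by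
  rw [Real.sqrt_eq_rpow, ← Real.rpow_natCast (a ^ ((1:ℝ)/2)) 3, ← Real.rpow_mul ha]
  norm_num

lemma gmono (d e : ℝ) (hd : 1 < d) (he : 0 < e) {t₁ t₂ : ℝ}
    (h1 : 1 < t₁) (h2d : t₂ ≤ d) (hlt : t₁ < t₂) :
    e * (t₁ - 1) / (d ^ 2 + 1 - 2 * t₁) ^ ((3:ℝ)/2)
      < e * (t₂ - 1) / (d ^ 2 + 1 - 2 * t₂) ^ ((3:ℝ)/2) := by
  have hA2 : (0:ℝ) < d ^ 2 + 1 - 2 * t₂ := by nlinarith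
  have hA1 : (0:ℝ) < d ^ 2 + 1 - 2 * t₁ := by nlinarith
  have hp2 : (0:ℝ) < (d ^ 2 + 1 - 2 * t₂) ^ ((3:ℝ)/2) := Real.rpow_pos_of_pos hA2 _
  have hp1 : (0:ℝ) < (d ^ 2 + 1 - 2 * t₁) ^ ((3:ℝ)/2) := Real.rpow_pos_of_pos hA1 _
  rw [div_lt_div_iff₀ hp1 hp2]
  have hrl : (d ^ 2 + 1 - 2 * t₂) ^ ((3:ℝ)/2) < (d ^ 2 + 1 - 2 * t₁) ^ ((3:ℝ)/2) :=
    Real.rpow_lt_rpow hA2.le (by linarith) (by norm_num)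
  have h01 : 0 ≤ e * (t₁ - 1) := by nlinarith
  have hee : e * (t₁ - 1) < e * (t₂ - 1) := by nlinarith
  exact mul_lt_mul'' hee hrl h01 hp2.le

lemma ginj (d e : ℝ) (hd : 1 < d) (he : 0 < e) {t₁ t₂ : ℝ}
    (h1 : 1 < t₁) (h1d : t₁ ≤ d) (h2 : 1 < t₂) (h2d : t₂ ≤ d)
    (heq : e * (t₁ - 1) / (d ^ 2 + 1 - 2 * t₁) ^ ((3:ℝ)/2)
      = e * (t₂ - 1) / (d ^ 2 + 1 - 2 * t₂) ^ ((3:ℝ)/2)) : t₁ = t₂ := by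
  rcases lt_trichotomy t₁ t₂ with h | h | h
  · exact absurd heq (ne_of_lt (gmono d e hd he h1 h2d h))
  · exact h
  · exact absurd heq.symm (ne_of_lt (gmono d e hd he h2 h1d h))

theorem stmt_10 (d e : ℝ) (hd : 1 < d) (he : 0 < e) :
    (StrictMonoOn (fun β => Real.sqrt (d ^ 2 + 1 - 2 * d * Real.cos β))
      (Set.Icc 0 π)) ∧
    (StrictAntiOn
      (fun β => e * (d * Real.cos β - 1) / (d ^ 2 + 1 - 2 * d * Real.cos β) ^ ((3 : ℝ) / 2))
      {β | β ∈ Set.Icc 0 π ∧ 1 < d * Real.cos β}) ∧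
    (∀ E : EuclideanSpace ℝ (Fin 3), ‖E‖ = d → ∀ v : ℝ,
      ({X : EuclideanSpace ℝ (Fin 3) |
          ‖X‖ = 1 ∧ 0 < (inner ℝ X (E - X) : ℝ) ∧
          e * (inner ℝ X (E - X) : ℝ) / ‖E - X‖ ^ 3 = v}).Nonempty →
      ∃ β₀ : ℝ, β₀ ∈ Set.Icc 0 π ∧
        {X : EuclideanSpace ℝ (Fin 3) |
          ‖X‖ = 1 ∧ 0 < (inner ℝ X (E - X) : ℝ) ∧
          e * (inner ℝ X (E - X) : ℝ) / ‖E - X‖ ^ 3 = v} =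
        {X : EuclideanSpace ℝ (Fin 3) |
          ‖X‖ = 1 ∧ (inner ℝ X ((‖E‖)⁻¹ • E) : ℝ) = Real.cos β₀}) := by
  refine ⟨?_, ?_, ?_⟩
  · intro β₁ hβ₁ β₂ hβ₂ hlt
    have hc : Real.cos β₂ < Real.cos β₁ := Real.strictAntiOn_cos hβ₁ hβ₂ hlt
    have hc1 : Real.cos β₁ ≤ 1 := Real.cos_le_one _
    apply Real.sqrt_lt_sqrt (by nlinarith) (by nlinarith)
  · intro β₁ hβ₁ β₂ hβ₂ hlt
    have hc : Real.cos β₂ < Real.cos β₁ := Real.strictAntiOn_cos hβ₁.1 hβ₂.1 hlt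
    have hc1 : Real.cos β₁ ≤ 1 := Real.cos_le_one _
    have hc2 : Real.cos β₂ ≤ 1 := Real.cos_le_one _
    have hd0 : (0:ℝ) < d := by linarith
    have h := gmono d e hd he hβ₂.2 (show d * Real.cos β₁ ≤ d by nlinarith)
      (show d * Real.cos β₂ < d * Real.cos β₁ by nlinarith)
    simpa only [mul_assoc] using h
  · intro E hE v ⟨X₀, hX₀⟩
    have hd0 : (0:ℝ) < d := by linarith
    -- general facts for unit X
    have fact : ∀ X : EuclideanSpace ℝ (Fin 3), ‖X‖ = 1 →
        (inner ℝ X (E - X) : ℝ) = (inner ℝ X E : ℝ) - 1 ∧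
        ‖E - X‖ ^ 3 = (d ^ 2 + 1 - 2 * (inner ℝ X E : ℝ)) ^ ((3:ℝ)/2) ∧
        (inner ℝ X E : ℝ) ≤ d := by
      intro X hX
      have h1 : (inner ℝ X (E - X) : ℝ) = (inner ℝ X E : ℝ) - 1 := by
        rw [inner_sub_right, real_inner_self_eq_norm_sq, hX]; ring
      have hsq : ‖E - X‖ ^ 2 = d ^ 2 + 1 - 2 * (inner ℝ X E : ℝ) := by
        rw [@norm_sub_sq_real, hE, hX, real_inner_comm]; ring
      have hnn : (0:ℝ) ≤ d ^ 2 + 1 - 2 * (inner ℝ X E : ℝ) := by rw [← hsq]; positivity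
      have hnorm : ‖E - X‖ = Real.sqrt (d ^ 2 + 1 - 2 * (inner ℝ X E : ℝ)) := by
        rw [← hsq, Real.sqrt_sq (norm_nonneg _)]
      refine ⟨h1, by rw [hnorm, sqrt_pow3 hnn], ?_⟩
      calc (inner ℝ X E : ℝ) ≤ ‖X‖ * ‖E‖ := real_inner_le_norm X E
        _ = d := by rw [hX, hE, one_mul]
    obtain ⟨hX₀n, hX₀lit, hX₀v⟩ := hX₀
    obtain ⟨hi₀, hn₀, hle₀⟩ := fact X₀ hX₀n
    set t₀ : ℝ := (inner ℝ X₀ E : ℝ) with ht₀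
    have ht₀1 : 1 < t₀ := by rw [hi₀] at hX₀lit; linarith
    have hmem : t₀ / d ∈ Set.Icc (-1:ℝ) 1 := by
      constructor
      · rw [le_div_iff₀ hd0]; nlinarith
      · rw [div_le_one hd0]; exact hle₀
    refine ⟨Real.arccos (t₀ / d), ⟨Real.arccos_nonneg _, Real.arccos_le_pi _⟩, ?_⟩
    have hcos : Real.cos (Real.arccos (t₀ / d)) = t₀ / d := Real.cos_arccos hmem.1 hmem.2
    have hv : e * (t₀ - 1) / (d ^ 2 + 1 - 2 * t₀) ^ ((3:ℝ)/2) = v := by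
      rw [← hX₀v, hi₀, hn₀]
    ext X
    simp only [Set.mem_setOf_eq]
    constructor
    · rintro ⟨hXn, hXlit, hXv⟩
      obtain ⟨hi, hn, hle⟩ := fact X hXn
      set t : ℝ := (inner ℝ X E : ℝ) with ht
      have ht1 : 1 < t := by rw [hi] at hXlit; linarith
      have hgv : e * (t - 1) / (d ^ 2 + 1 - 2 * t) ^ ((3:ℝ)/2) = v := by
        rw [← hXv, hi, hn]
      have : t = t₀ := ginj d e hd he ht1 hle ht₀1 hle₀ (hgv.trans hv.symm)
      refine ⟨hXn, ?_⟩
      rw [hcos, real_inner_smul_right, hE, ← ht, this]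
      field_simp
    · rintro ⟨hXn, hXc⟩
      obtain ⟨hi, hn, hle⟩ := fact X hXn
      have hdne : d ≠ 0 := ne_of_gt hd0
      have htt : (inner ℝ X E : ℝ) = t₀ := by
        rw [hcos, real_inner_smul_right, hE, div_eq_inv_mul] at hXc
        exact mul_left_cancel₀ (inv_ne_zero hdne) hXc
      refine ⟨hXn, ?_, ?_⟩
      · rw [hi, htt]; linarith
      · rw [hi, hn, htt, ← hv]
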